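/- One-step dynamic-programming (backward recursion) correctness: for every x ∈ ℝ^{n_x}, the function w ↦ ½ [x;w]ᵀ Q [x;w] + lᵀ [x;w] + c + ½ (Ax+Bw+a)ᵀ P' (Ax+Bw+a) − Ψ'ᵀ (Ax+Bw+a) + c̄' attains its minimum over w ∈ ℝ^{n_w} uniquely at w = k + Kx, and the minimum value equals ½ xᵀ P x − Ψᵀ x + c̄. -/

import Mathlib

open Matrix

/-- One-step cost-to-go function. -/
noncomputable def oneStepCost (nx nw : ℕ)
    (A : Matrix (Fin nx) (Fin nx) ℝ) (B : Matrix (Fin nx) (Fin nw) ℝ) (a : Fin nx → ℝ)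
    (Qx : Matrix (Fin nx) (Fin nx) ℝ) (Qxw : Matrix (Fin nx) (Fin nw) ℝ)
    (Qw : Matrix (Fin nw) (Fin nw) ℝ)
    (lx : Fin nx → ℝ) (lw : Fin nw → ℝ) (c : ℝ)
    (P' : Matrix (Fin nx) (Fin nx) ℝ) (Ψ' : Fin nx → ℝ) (cb' : ℝ)
    (x : Fin nx → ℝ) (w : Fin nw → ℝ) : ℝ :=
  (1 / 2) * (Sum.elim x w ⬝ᵥ (Matrix.fromBlocks Qx Qxw Qxwᵀ Qw *ᵥ Sum.elim x w))
    + Sum.elim lx lw ⬝ᵥ Sum.elim x w + c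
    + (1 / 2) * ((A *ᵥ x + B *ᵥ w + a) ⬝ᵥ (P' *ᵥ (A *ᵥ x + B *ᵥ w + a)))
    - Ψ' ⬝ᵥ (A *ᵥ x + B *ᵥ w + a) + cb'

lemma dp_flip {m n : ℕ} (M : Matrix (Fin m) (Fin n) ℝ) (u : Fin m → ℝ) (v : Fin n → ℝ) :
    u ⬝ᵥ (M *ᵥ v) = v ⬝ᵥ (Mᵀ *ᵥ u) := by
  rw [Matrix.dotProduct_mulVec, ← Matrix.mulVec_transpose, dotProduct_comm]

lemma dp_flip' {m n : ℕ} (M : Matrix (Fin m) (Fin n) ℝ) (u : Fin n → ℝ) (v : Fin m → ℝ) :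
    (M *ᵥ u) ⬝ᵥ v = u ⬝ᵥ (Mᵀ *ᵥ v) := by
  rw [dotProduct_comm, dp_flip]

lemma claim1 (nx nw : ℕ)
    (A : Matrix (Fin nx) (Fin nx) ℝ) (B : Matrix (Fin nx) (Fin nw) ℝ) (a : Fin nx → ℝ)
    (Qx : Matrix (Fin nx) (Fin nx) ℝ) (Qxw : Matrix (Fin nx) (Fin nw) ℝ)
    (Qw : Matrix (Fin nw) (Fin nw) ℝ)
    (lx : Fin nx → ℝ) (lw : Fin nw → ℝ) (c : ℝ)
    (P' : Matrix (Fin nx) (Fin nx) ℝ) (Ψ' : Fin nx → ℝ) (cb' : ℝ)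
    (hP's : P'ᵀ = P') (x : Fin nx → ℝ) (w : Fin nw → ℝ) :
    oneStepCost nx nw A B a Qx Qxw Qw lx lw c P' Ψ' cb' x w =
      (1/2) * (w ⬝ᵥ ((Qw + Bᵀ*P'*B) *ᵥ w))
      + w ⬝ᵥ (Qxwᵀ *ᵥ x + lw + (Bᵀ*(P'*A)) *ᵥ x + Bᵀ *ᵥ (P' *ᵥ a) - Bᵀ *ᵥ Ψ')
      + ((1/2) * (x ⬝ᵥ (Qx *ᵥ x)) + lx ⬝ᵥ x + c
         + (1/2) * ((A *ᵥ x + a) ⬝ᵥ (P' *ᵥ (A *ᵥ x + a))) - Ψ' ⬝ᵥ (A *ᵥ x + a) + cb') := by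
  simp only [oneStepCost, Matrix.fromBlocks_mulVec, sumElim_dotProduct_sumElim,
    Matrix.mulVec_add, Matrix.add_mulVec, dotProduct_add, add_dotProduct,
    dotProduct_sub, sub_dotProduct, Sum.elim_comp_inl, Sum.elim_comp_inr,
    ← Matrix.mulVec_mulVec]
  rw [dp_flip Qxw x w, dp_flip P' (A *ᵥ x) (B *ᵥ w), dp_flip P' a (B *ᵥ w),
    dotProduct_comm Ψ' (B *ᵥ w), dotProduct_comm lw w]
  simp only [hP's, dp_flip' B]
  ring


/-- One-step dynamic-programming (backward recursion) correctness. -/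
theorem one_step_dp_correct
    (nx nw : ℕ)
    (A : Matrix (Fin nx) (Fin nx) ℝ) (B : Matrix (Fin nx) (Fin nw) ℝ) (a : Fin nx → ℝ)
    (Qx : Matrix (Fin nx) (Fin nx) ℝ) (Qxw : Matrix (Fin nx) (Fin nw) ℝ)
    (Qw : Matrix (Fin nw) (Fin nw) ℝ)
    (lx : Fin nx → ℝ) (lw : Fin nw → ℝ) (c : ℝ)
    (P' : Matrix (Fin nx) (Fin nx) ℝ) (Ψ' : Fin nx → ℝ) (cb' : ℝ)
    (hQ : (Matrix.fromBlocks Qx Qxw Qxwᵀ Qw).PosSemidef)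
    (hP' : P'.PosSemidef)
    -- Riccati step quantities
    (F G H : _) (K : Matrix (Fin nw) (Fin nx) ℝ) (k : Fin nw → ℝ)
    (P : Matrix (Fin nx) (Fin nx) ℝ) (Ψ : Fin nx → ℝ) (cb : ℝ)
    (hF : F = Qx + Aᵀ * P' * A)
    (hG : G = Qw + Bᵀ * P' * B)
    (hH : H = Qxw + Aᵀ * P' * B)
    (hGpd : G.PosDef)
    (hK : K = -(G⁻¹ * Hᵀ))
    (hk : k = G⁻¹ *ᵥ (Bᵀ *ᵥ Ψ' - lw - Bᵀ *ᵥ (P' *ᵥ a)))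
    (hP : P = F - Kᵀ * G * K)
    (hΨ : Ψ = Aᵀ *ᵥ Ψ' - H *ᵥ k - lx - Aᵀ *ᵥ (P' *ᵥ a))
    (hcb : cb = cb' + (1 / 2) * (a ⬝ᵥ (P' *ᵥ a)) - Ψ' ⬝ᵥ a
                - (1 / 2) * (k ⬝ᵥ (G *ᵥ k)) + c) :
    ∀ x : Fin nx → ℝ,
      (∀ w : Fin nw → ℝ, w ≠ k + K *ᵥ x →
        oneStepCost nx nw A B a Qx Qxw Qw lx lw c P' Ψ' cb' x (k + K *ᵥ x)
          < oneStepCost nx nw A B a Qx Qxw Qw lx lw c P' Ψ' cb' x w)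
      ∧ oneStepCost nx nw A B a Qx Qxw Qw lx lw c P' Ψ' cb' x (k + K *ᵥ x)
          = (1 / 2) * (x ⬝ᵥ (P *ᵥ x)) - Ψ ⬝ᵥ x + cb := by
  have hP's : P'ᵀ = P' := by simpa [Matrix.IsSymm] using hP'.1
  have hGs : Gᵀ = G := by simpa [Matrix.IsSymm] using hGpd.1
  have hGG : G * G⁻¹ = 1 := Matrix.mul_nonsing_inv G (isUnit_iff_ne_zero.2 hGpd.det_pos.ne')
  have hGK : G * K = -Hᵀ := by rw [hK, Matrix.mul_neg, ← Matrix.mul_assoc, hGG, Matrix.one_mul]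
  have hGk : G *ᵥ k = Bᵀ *ᵥ Ψ' - lw - Bᵀ *ᵥ (P' *ᵥ a) := by
    rw [hk, Matrix.mulVec_mulVec, hGG, Matrix.one_mulVec]
  intro x
  have hGKx : G *ᵥ (K *ᵥ x) = -(Hᵀ *ᵥ x) := by
    rw [Matrix.mulVec_mulVec, hGK, Matrix.neg_mulVec]
  have hb : Qxwᵀ *ᵥ x + lw + (Bᵀ*(P'*A)) *ᵥ x + Bᵀ *ᵥ (P' *ᵥ a) - Bᵀ *ᵥ Ψ'
      = -(G *ᵥ (k + K *ᵥ x)) := by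
    rw [Matrix.mulVec_add, hGk, hGKx, hH]
    simp only [Matrix.transpose_add, Matrix.transpose_mul, Matrix.transpose_transpose, hP's,
      Matrix.add_mulVec, Matrix.mul_assoc, ← Matrix.mulVec_mulVec]
    abel
  have claim4 : oneStepCost nx nw A B a Qx Qxw Qw lx lw c P' Ψ' cb' x (k + K *ᵥ x)
      = (1 / 2) * (x ⬝ᵥ (P *ᵥ x)) - Ψ ⬝ᵥ x + cb := by
    rw [claim1 nx nw A B a Qx Qxw Qw lx lw c P' Ψ' cb' hP's x (k + K *ᵥ x), ← hG, hb,
      hP, hF, hΨ, hcb, show Kᵀ*G*K = -(Kᵀ*Hᵀ) by rw [Matrix.mul_assoc, hGK, Matrix.mul_neg]]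
    simp only [Matrix.add_mulVec, Matrix.sub_mulVec, Matrix.neg_mulVec, Matrix.mulVec_add,
      Matrix.mulVec_sub, Matrix.mulVec_neg, dotProduct_add, dotProduct_sub, dotProduct_neg,
      add_dotProduct, sub_dotProduct, neg_dotProduct, ← Matrix.mulVec_mulVec]
    rw [dp_flip G (K *ᵥ x) k, hGs]
    simp only [hGKx, dotProduct_neg, neg_dotProduct, dp_flip', Matrix.transpose_transpose,
      hP's, Matrix.mulVec_neg, dotProduct_add, dotProduct_sub, dotProduct_neg]
    rw [dp_flip Aᵀ x (P' *ᵥ a), Matrix.transpose_transpose, dp_flip' P' a, hP's]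
    ring
  refine ⟨fun w hw => ?_, claim4⟩
  have key : oneStepCost nx nw A B a Qx Qxw Qw lx lw c P' Ψ' cb' x w
      = (1/2) * ((w - (k + K *ᵥ x)) ⬝ᵥ (G *ᵥ (w - (k + K *ᵥ x))))
        + oneStepCost nx nw A B a Qx Qxw Qw lx lw c P' Ψ' cb' x (k + K *ᵥ x) := by
    rw [claim1 nx nw A B a Qx Qxw Qw lx lw c P' Ψ' cb' hP's x w,
      claim1 nx nw A B a Qx Qxw Qw lx lw c P' Ψ' cb' hP's x (k + K *ᵥ x), ← hG, hb]
    simp only [Matrix.mulVec_sub, dotProduct_sub, sub_dotProduct, dotProduct_neg,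
      neg_dotProduct]
    rw [dp_flip G (k + K *ᵥ x) w, hGs]
    ring
  have hpos : 0 < (w - (k + K *ᵥ x)) ⬝ᵥ (G *ᵥ (w - (k + K *ᵥ x))) := by
    simpa using hGpd.dotProduct_mulVec_pos (sub_ne_zero.2 hw)
  rw [key]
  linarith
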